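/- Conversely, a valid order of removal steps for I whose elements all lie in a single connected component C of the redundant inputs of I is a valid order of removal steps for C. -/

import Mathlib

/-- Redundancy of input `i` in input set `I`:
`min { |Seq(bl) ∩ I| : bl ∈ Cov i } − 1`, where `Seq(bl) = {x : bl ∈ Cov x}`. -/
noncomputable def red {Inp Obj : Type*} [DecidableEq Obj]
    (Cov : Inp → Finset Obj) (i : Inp) (I : Finset Inp) : ℤ :=
  ((sInf {n : ℕ | ∃ bl ∈ Cov i, (I.filter fun x => bl ∈ Cov x).card = n} : ℕ) : ℤ) - 1

/-- A list is a valid order of removal steps for `I`. -/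
noncomputable def RO {Inp Obj : Type*} [DecidableEq Inp] [DecidableEq Obj]
    (Cov : Inp → Finset Obj) : Finset Inp → List Inp → Prop
  | _, [] => True
  | I, i :: l => i ∈ I ∧ 0 < red Cov i I ∧ RO Cov (I.erase i) l

lemma RO.mem_of_mem {Inp Obj : Type*} [DecidableEq Inp] [DecidableEq Obj]
    (Cov : Inp → Finset Obj) : ∀ (I : Finset Inp) (l : List Inp), RO Cov I l →
    ∀ x ∈ l, x ∈ I := by
  intro I l
  induction l generalizing I with
  | nil => intro _ x hx; cases hx
  | cons i l ih =>
    rintro ⟨hiI, _, hrest⟩ x hx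
    rcases List.mem_cons.mp hx with h | h
    · exact h ▸ hiI
    · exact Finset.erase_subset i I (ih _ hrest x h)

lemma red_eq_of_component {Inp Obj : Type*} [DecidableEq Inp] [DecidableEq Obj]
    (Cov : Inp → Finset Obj) (I C : Finset Inp) (hCI : C ⊆ I)
    (hCcomp : ∀ i ∈ C, ∀ bl ∈ Cov i, ∀ j ∈ I, bl ∈ Cov j → j ∈ C)
    (i : Inp) (hi : i ∈ C) : red Cov i C = red Cov i I := by
  have key : ∀ bl ∈ Cov i,
      (C.filter fun x => bl ∈ Cov x) = (I.filter fun x => bl ∈ Cov x) := by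
    intro bl hbl
    apply Finset.Subset.antisymm
    · exact Finset.filter_subset_filter _ hCI
    · intro x hx
      simp only [Finset.mem_filter] at hx ⊢
      exact ⟨hCcomp i hi bl hbl x hx.1 hx.2, hx.2⟩
  unfold red
  congr 2
  apply congrArg
  ext n
  constructor <;> rintro ⟨bl, hbl, hn⟩ <;> exact ⟨bl, hbl, by rw [← hn, key bl hbl]⟩

/-- A valid order of removal steps for `I` whose elements all lie in a single
connected component `C` of the redundant inputs of `I` is valid for `C`. -/
theorem reduction_within_component {Inp Obj : Type*} [DecidableEq Inp] [DecidableEq Obj]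
    (Cov : Inp → Finset Obj) (hCov : ∀ i : Inp, (Cov i).Nonempty)
    (I C : Finset Inp) (hCI : C ⊆ I)
    (hCred : ∀ i ∈ C, 0 < red Cov i I)
    (hCcomp : ∀ i ∈ C, ∀ bl ∈ Cov i, ∀ j ∈ I, bl ∈ Cov j → j ∈ C)
    (l : List Inp) (hl : RO Cov I l) (hlC : ∀ x ∈ l, x ∈ C) : RO Cov C l := by
  clear hCred
  induction l generalizing I C with
  | nil => trivial
  | cons i l ih =>
    obtain ⟨hiI, hred, hrest⟩ := hl
    have hiC : i ∈ C := hlC i (List.mem_cons_self (a := i) (l := l))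
    refine ⟨hiC, ?_, ?_⟩
    · rw [red_eq_of_component Cov I C hCI hCcomp i hiC]; exact hred
    · apply ih (I.erase i) (C.erase i)
      · exact Finset.erase_subset_erase i hCI
      · intro a ha bl hbl j hj hjbl
        rw [Finset.mem_erase] at ha hj ⊢
        exact ⟨hj.1, hCcomp a ha.2 bl hbl j hj.2 hjbl⟩
      · exact hrest
      · intro x hx
        rw [Finset.mem_erase]
        exact ⟨(Finset.mem_erase.mp (RO.mem_of_mem Cov _ l hrest x hx)).1,
          hlC x (List.mem_cons_of_mem i hx)⟩
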